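/- arXiv:1202.3063 — 3 statements merged into one kernel-verified Lean document; each statement's English description precedes it below -/
import Mathlib

section
/- Let β ∈ ℂ with 0 < |β| < 1 and let h : Δ → ℂ be univalent with β·h(Δ) ⊆ h(Δ). Fix x₀ ∈ Δ and let x₁ ∈ Δ be the (unique) point with h(x₁) = β·h(x₀). Then |β|·|h'(x₀)|·(1−|x₀|²) ≤ |h'(x₁)|·(1−|x₁|²). -/
open Complex Metric Set

open Filter
open scoped Topology


private lemma mobius_normSq_identity (a z : ℂ) :
    Complex.normSq (1 - (starRingEnd ℂ) a * z) - Complex.normSq (a - z)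
      = (1 - Complex.normSq a) * (1 - Complex.normSq z) := by
  have h1 : (((Complex.normSq (1 - (starRingEnd ℂ) a * z) - Complex.normSq (a - z) : ℝ)) : ℂ)
      = (((1 - Complex.normSq a) * (1 - Complex.normSq z) : ℝ) : ℂ) := by
    push_cast
    rw [← Complex.mul_conj, ← Complex.mul_conj, ← Complex.mul_conj, ← Complex.mul_conj]
    simp only [map_sub, map_mul, map_one, Complex.conj_conj]
    ring
  exact_mod_cast h1

private lemma mobius_denom_ne {a z : ℂ} (ha : ‖a‖ < 1) (hz : ‖z‖ < 1) :
    1 - (starRingEnd ℂ) a * z ≠ 0 := by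
  intro hc
  have h1 : (starRingEnd ℂ) a * z = 1 := by linear_combination -hc
  have h2 : ‖(starRingEnd ℂ) a * z‖ < 1 := by
    rw [norm_mul, Complex.norm_conj]
    nlinarith [norm_nonneg a, norm_nonneg z]
  rw [h1] at h2
  simp at h2

private lemma mobius_mapsTo {a z : ℂ} (ha : ‖a‖ < 1) (hz : ‖z‖ < 1) :
    ‖(a - z) / (1 - (starRingEnd ℂ) a * z)‖ < 1 := by
  have hden := mobius_denom_ne ha hz
  have hdenpos : 0 < ‖1 - (starRingEnd ℂ) a * z‖ := by
    simpa [norm_pos_iff] using hden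
  rw [norm_div, div_lt_one hdenpos]
  have hlt : Complex.normSq (a - z) < Complex.normSq (1 - (starRingEnd ℂ) a * z) := by
    have h0 : (0:ℝ) < (1 - Complex.normSq a) * (1 - Complex.normSq z) := by
      have e1 := Complex.sq_norm a
      have e2 := Complex.sq_norm z
      have pa : Complex.normSq a < 1 := by nlinarith [norm_nonneg a, e1]
      have pz : Complex.normSq z < 1 := by nlinarith [norm_nonneg z, e2]
      exact mul_pos (by linarith) (by linarith)
    nlinarith [mobius_normSq_identity a z]
  calc ‖a - z‖ = Real.sqrt (Complex.normSq (a - z)) := Complex.norm_def ..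
    _ < Real.sqrt (Complex.normSq (1 - (starRingEnd ℂ) a * z)) :=
        Real.sqrt_lt_sqrt (Complex.normSq_nonneg _) hlt
    _ = ‖1 - (starRingEnd ℂ) a * z‖ := (Complex.norm_def ..).symm  

private lemma mobius_hasDerivAt (a : ℂ) {z : ℂ} (hne : 1 - (starRingEnd ℂ) a * z ≠ 0) :
    HasDerivAt (fun w => (a - w) / (1 - (starRingEnd ℂ) a * w))
      (((-1) * (1 - (starRingEnd ℂ) a * z) - (a - z) * (-(starRingEnd ℂ) a)) /
        (1 - (starRingEnd ℂ) a * z) ^ 2) z := by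
  have hu : HasDerivAt (fun w : ℂ => a - w) (-1) z := (hasDerivAt_id z).const_sub a
  have hv : HasDerivAt (fun w : ℂ => 1 - (starRingEnd ℂ) a * w) (-(starRingEnd ℂ) a) z := by
    have := ((hasDerivAt_id z).const_mul ((starRingEnd ℂ) a)).const_sub 1
    simpa using this
  exact hu.div hv hne

private lemma analyticAt_hasStrictDerivAt' {f : ℂ → ℂ} {z : ℂ} (hf : AnalyticAt ℂ f z) :
    HasStrictDerivAt f (deriv f z) z := by
  obtain ⟨p, hp⟩ := hf
  have h1 := hp.hasStrictDerivAt
  have h2 := h1.hasDerivAt.deriv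
  exact h2 ▸ h1

private lemma exists_analytic_nth_root' {g : ℂ → ℂ} {z₀ : ℂ} (hg : AnalyticAt ℂ g z₀)
    (h0 : g z₀ ≠ 0) {n : ℕ} (hn : n ≠ 0) :
    ∃ ψ : ℂ → ℂ, AnalyticAt ℂ ψ z₀ ∧ ψ z₀ ≠ 0 ∧ ∀ᶠ z in 𝓝 z₀, ψ z ^ n = g z := by
  set c := (g z₀) ^ ((n : ℂ)⁻¹) with hc
  have hcn : c ^ n = g z₀ := Complex.cpow_nat_inv_pow _ hn
  have hc0 : c ≠ 0 := fun hcz => h0 (by rw [← hcn, hcz, zero_pow hn])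
  refine ⟨fun z => c * Complex.exp ((n : ℂ)⁻¹ * Complex.log (g z / g z₀)), ?_, ?_, ?_⟩
  · exact analyticAt_const.mul
      ((analyticAt_const.mul ((hg.div analyticAt_const h0).clog
        (by simp [div_self h0, Complex.one_mem_slitPlane]))).cexp)
  · simp [div_self h0, Complex.log_one, hc0]
  · filter_upwards [hg.continuousAt.eventually_ne h0] with z hz
    rw [mul_pow, hcn, ← Complex.exp_nat_mul]
    rw [show (n : ℂ) * ((n : ℂ)⁻¹ * Complex.log (g z / g z₀)) = Complex.log (g z / g z₀) by
      rw [← mul_assoc, mul_inv_cancel₀ (Nat.cast_ne_zero.mpr hn), one_mul]]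
    rw [Complex.exp_log (div_ne_zero hz h0), mul_comm, div_mul_cancel₀ _ h0]

private lemma deriv_ne_zero_of_injOn' {s : Set ℂ} (hs : IsOpen s) {h : ℂ → ℂ}
    (hd : DifferentiableOn ℂ h s) (hi : InjOn h s) {z₀ : ℂ} (hz₀ : z₀ ∈ s) :
    deriv h z₀ ≠ 0 := by
  intro hder
  have han : AnalyticAt ℂ h z₀ := hd.analyticAt (hs.mem_nhds hz₀)
  have hfan : AnalyticAt ℂ (fun z => h z - h z₀) z₀ := han.sub analyticAt_const
  have hmem : ∀ᶠ z in 𝓝 z₀, z ∈ s := hs.eventually_mem hz₀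
  -- `h - h z₀` is not eventually zero
  have hne : ¬ ∀ᶠ z in 𝓝 z₀, h z - h z₀ = 0 := by
    intro hev
    obtain ⟨z, ⟨hz0, hzs⟩, hzne⟩ :=
      (((hev.and hmem).filter_mono (nhdsWithin_le_nhds : 𝓝[≠] z₀ ≤ 𝓝 z₀)).and
        self_mem_nhdsWithin).exists
    exact hzne (hi hzs hz₀ (sub_eq_zero.mp hz0))
  obtain ⟨m, g, hg_an, hg0, hg_eq⟩ := (hfan.exists_eventuallyEq_pow_smul_nonzero_iff).mpr hne
  simp only [smul_eq_mul] at hg_eq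
  -- m ≠ 0
  have hm0 : m ≠ 0 := by
    intro hm
    have := hg_eq.self_of_nhds
    simp [hm] at this
    exact hg0 this.symm
  -- m ≠ 1
  have hm1 : m ≠ 1 := by
    intro hm
    have hsub1 : HasDerivAt (fun z : ℂ => z - z₀) 1 z₀ := (hasDerivAt_id z₀).sub_const z₀
    have hD' : HasDerivAt (fun z => (z - z₀) * g z) (1 * g z₀ + (z₀ - z₀) * deriv g z₀) z₀ :=
      hsub1.mul hg_an.differentiableAt.hasDerivAt
    have hD : HasDerivAt (fun z => h z - h z₀) (1 * g z₀ + (z₀ - z₀) * deriv g z₀) z₀ :=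
      hD'.congr_of_eventuallyEq (by filter_upwards [hg_eq] with z hz; simp [hz, hm])
    have : deriv (fun z => h z - h z₀) z₀ = deriv h z₀ := by
      simp [deriv_sub_const]
    rw [hD.deriv, hder] at this
    simp at this
    exact hg0 this
  have hm2 : 2 ≤ m := by omega
  -- analytic m-th root of g
  obtain ⟨ψ, hψan, hψ0, hψeq⟩ := exists_analytic_nth_root' hg_an hg0 hm0
  set φ : ℂ → ℂ := fun z => (z - z₀) * ψ z with hφdef
  have hφ0 : φ z₀ = 0 := by simp [hφdef]
  -- strict derivative of φ at z₀
  have hsub2 : HasStrictDerivAt (fun z : ℂ => z - z₀) 1 z₀ := (hasStrictDerivAt_id z₀).sub_const z₀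
  have hφstrict : HasStrictDerivAt φ (1 * ψ z₀ + (z₀ - z₀) * deriv ψ z₀) z₀ :=
    hsub2.mul (analyticAt_hasStrictDerivAt' hψan)
  have hφd : (1 : ℂ) * ψ z₀ + (z₀ - z₀) * deriv ψ z₀ = ψ z₀ := by ring
  rw [hφd] at hφstrict
  -- local inverse
  set Φ := hφstrict.localInverse φ (ψ z₀) z₀ hψ0 with hΦdef
  have hri : ∀ᶠ y in 𝓝 (0 : ℂ), φ (Φ y) = y := by
    have := hφstrict.hasStrictFDerivAt_equiv hψ0 |>.eventually_right_inverse
    rwa [show φ z₀ = 0 from hφ0] at this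
  have htend : Tendsto Φ (𝓝 (0 : ℂ)) (𝓝 z₀) := by
    have := (hφstrict.hasStrictFDerivAt_equiv hψ0).localInverse_tendsto
    rwa [show φ z₀ = 0 from hφ0] at this
  -- the good neighborhood of z₀
  have hP : ∀ᶠ z in 𝓝 z₀, z ∈ s ∧ h z - h z₀ = φ z ^ m := by
    filter_upwards [hmem, hg_eq, hψeq] with z h1 h2 h3
    refine ⟨h1, ?_⟩
    rw [h2, ← h3, hφdef]
    simp [mul_pow]
  -- primitive m-th root of unity
  set ζ : ℂ := Complex.exp (2 * Real.pi * Complex.I / m) with hζdef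
  have hζprim : IsPrimitiveRoot ζ m := Complex.isPrimitiveRoot_exp m hm0
  have hζm : ζ ^ m = 1 := hζprim.pow_eq_one
  have hζ1 : ζ ≠ 1 := hζprim.ne_one (by omega)
  have hmul : Tendsto (fun y : ℂ => ζ * y) (𝓝 0) (𝓝 0) := by
    have := (tendsto_id : Tendsto id (𝓝 (0:ℂ)) (𝓝 0)).const_mul ζ
    simpa using this
  -- pick a small nonzero y
  have hev : ∀ᶠ y in 𝓝 (0 : ℂ),
      ((Φ y ∈ s ∧ h (Φ y) - h z₀ = φ (Φ y) ^ m) ∧ φ (Φ y) = y) ∧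
      ((Φ (ζ * y) ∈ s ∧ h (Φ (ζ * y)) - h z₀ = φ (Φ (ζ * y)) ^ m) ∧ φ (Φ (ζ * y)) = ζ * y) :=
    ((htend.eventually hP).and hri).and (hmul.eventually ((htend.eventually hP).and hri))
  obtain ⟨y, ⟨⟨⟨hz₁s, hz₁eq⟩, hz₁φ⟩, ⟨⟨hz₂s, hz₂eq⟩, hz₂φ⟩⟩, hy0⟩ :=
    ((hev.filter_mono (nhdsWithin_le_nhds : 𝓝[≠] (0:ℂ) ≤ 𝓝 0)).and
      self_mem_nhdsWithin).exists
  -- contradiction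
  have heq : h (Φ y) = h (Φ (ζ * y)) := by
    have e1 : h (Φ y) - h z₀ = y ^ m := by rw [hz₁eq, hz₁φ]
    have e2 : h (Φ (ζ * y)) - h z₀ = y ^ m := by rw [hz₂eq, hz₂φ, mul_pow, hζm, one_mul]
    have := e1.trans e2.symm
    linear_combination this
  have hΦeq : Φ y = Φ (ζ * y) := hi hz₁s hz₂s heq
  have hy0' : y ≠ 0 := hy0
  have hyz : ζ * y = y := by conv_rhs => rw [← hz₁φ, hΦeq, hz₂φ]
  exact hζ1 (mul_right_cancel₀ hy0' (hyz.trans (one_mul y).symm))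

/-- **Key inequality of Theorem 2.** If `h` is univalent on the unit disk, `0 < |β| < 1`,
`β·h(Δ) ⊆ h(Δ)`, `x₀ ∈ Δ` and `x₁ ∈ Δ` with `h(x₁) = β·h(x₀)`, then
`|β||h'(x₀)|(1-|x₀|²) ≤ |h'(x₁)|(1-|x₁|²)`. -/
theorem schwarz_pick_key_inequality
    (h : ℂ → ℂ)
    (hdiff : DifferentiableOn ℂ h (ball (0 : ℂ) 1))
    (hinj : InjOn h (ball (0 : ℂ) 1))
    (β : ℂ) (hβ0 : 0 < ‖β‖) (hβ1 : ‖β‖ < 1)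
    (hsub : (fun w => β * w) '' (h '' ball (0 : ℂ) 1) ⊆ h '' ball (0 : ℂ) 1)
    (x₀ : ℂ) (hx₀ : x₀ ∈ ball (0 : ℂ) 1)
    (x₁ : ℂ) (hx₁ : x₁ ∈ ball (0 : ℂ) 1)
    (hx₁eq : h x₁ = β * h x₀) :
    ‖β‖ * ‖deriv h x₀‖ * (1 - ‖x₀‖ ^ 2) ≤
      ‖deriv h x₁‖ * (1 - ‖x₁‖ ^ 2) := by
  have habs : ∀ {z : ℂ}, z ∈ ball (0:ℂ) 1 ↔ ‖z‖ < 1 := by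
    intro z; rw [mem_ball_zero_iff]
  have hderiv_ne : ∀ w ∈ ball (0:ℂ) 1, deriv h w ≠ 0 := fun w hw =>
    deriv_ne_zero_of_injOn' isOpen_ball hdiff hinj hw
  have han : ∀ w ∈ ball (0:ℂ) 1, AnalyticAt ℂ h w := fun w hw =>
    hdiff.analyticAt (isOpen_ball.mem_nhds hw)
  -- the function F with h (F z) = β * h z
  have key : ∀ z, z ∈ ball (0:ℂ) 1 → ∃ w, w ∈ ball (0:ℂ) 1 ∧ h w = β * h z := by
    intro z hz
    obtain ⟨w, hw, hweq⟩ := hsub ⟨h z, ⟨z, hz, rfl⟩, rfl⟩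
    exact ⟨w, hw, hweq⟩
  classical
  set F : ℂ → ℂ := fun z => if hz : z ∈ ball (0:ℂ) 1 then (key z hz).choose else 0 with hFdef
  have hFball : ∀ z, z ∈ ball (0:ℂ) 1 → F z ∈ ball (0:ℂ) 1 := by
    intro z hz; simp only [hFdef, dif_pos hz]; exact (key z hz).choose_spec.1
  have hFeq : ∀ z, z ∈ ball (0:ℂ) 1 → h (F z) = β * h z := by
    intro z hz; simp only [hFdef, dif_pos hz]; exact (key z hz).choose_spec.2
  have hFx₀ : F x₀ = x₁ :=
    hinj (hFball x₀ hx₀) hx₁ (by rw [hFeq x₀ hx₀, ← hx₁eq])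
  -- F has a derivative everywhere on the ball
  have hF : ∀ w, w ∈ ball (0:ℂ) 1 →
      HasDerivAt F ((deriv h (F w))⁻¹ * (β * deriv h w)) w := by
    intro w hw
    have hFw := hFball w hw
    have hstrict : HasStrictDerivAt h (deriv h (F w)) (F w) :=
      analyticAt_hasStrictDerivAt' (han _ hFw)
    have hne := hderiv_ne _ hFw
    set Φ := hstrict.localInverse h (deriv h (F w)) (F w) hne with hΦdef
    have hri : ∀ᶠ y in 𝓝 (h (F w)), h (Φ y) = y :=
      (hstrict.hasStrictFDerivAt_equiv hne).eventually_right_inverse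
    have htend : Tendsto Φ (𝓝 (h (F w))) (𝓝 (F w)) :=
      (hstrict.hasStrictFDerivAt_equiv hne).localInverse_tendsto
    have hΦderiv : HasDerivAt Φ (deriv h (F w))⁻¹ (h (F w)) :=
      (hstrict.to_localInverse hne).hasDerivAt
    have hbh : HasDerivAt (fun z => β * h z) (β * deriv h w) w :=
      ((han w hw).differentiableAt.hasDerivAt).const_mul β
    have hbhw : β * h w = h (F w) := (hFeq w hw).symm
    have hcont : Tendsto (fun z => β * h z) (𝓝 w) (𝓝 (h (F w))) := by
      rw [← hbhw]
      exact (continuousAt_const.mul (han w hw).continuousAt).tendsto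
    have hcomp : HasDerivAt (fun z => Φ (β * h z))
        ((deriv h (F w))⁻¹ * (β * deriv h w)) w := by
      have h1 : HasDerivAt Φ (deriv h (F w))⁻¹ ((fun z => β * h z) w) := by
        simpa [hbhw] using hΦderiv
      have := h1.comp w hbh
      exact this
    have hFev : F =ᶠ[𝓝 w] fun z => Φ (β * h z) := by
      have E1 : ∀ᶠ z in 𝓝 w, h (Φ (β * h z)) = β * h z := hcont.eventually hri
      have E2 : ∀ᶠ z in 𝓝 w, Φ (β * h z) ∈ ball (0:ℂ) 1 :=
        hcont.eventually (htend.eventually (isOpen_ball.eventually_mem hFw))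
      have E3 : ∀ᶠ z in 𝓝 w, z ∈ ball (0:ℂ) 1 := isOpen_ball.eventually_mem hw
      filter_upwards [E1, E2, E3] with z e1 e2 e3
      exact hinj (hFball z e3) e2 (by rw [hFeq z e3, e1])
    exact hcomp.congr_of_eventuallyEq hFev
  -- Möbius maps
  set c₀ : ℂ := (starRingEnd ℂ) x₀ with hc₀
  set c₁ : ℂ := (starRingEnd ℂ) x₁ with hc₁
  set m₀ : ℂ → ℂ := fun z => (x₀ - z) / (1 - c₀ * z) with hm₀def
  set m₁ : ℂ → ℂ := fun z => (x₁ - z) / (1 - c₁ * z) with hm₁def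
  have hax₀ : ‖x₀‖ < 1 := habs.mp hx₀
  have hax₁ : ‖x₁‖ < 1 := habs.mp hx₁
  set G : ℂ → ℂ := fun z => m₁ (F (m₀ z)) with hGdef
  have hm₀maps : ∀ z ∈ ball (0:ℂ) 1, m₀ z ∈ ball (0:ℂ) 1 := fun z hz =>
    habs.mpr (mobius_mapsTo hax₀ (habs.mp hz))
  have hm₁maps : ∀ z ∈ ball (0:ℂ) 1, m₁ z ∈ ball (0:ℂ) 1 := fun z hz =>
    habs.mpr (mobius_mapsTo hax₁ (habs.mp hz))
  have hGmaps : MapsTo G (ball (0:ℂ) 1) (ball (0:ℂ) 1) := fun z hz =>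
    hm₁maps _ (hFball _ (hm₀maps _ hz))
  have hm₀0 : m₀ 0 = x₀ := by simp [hm₀def]
  have hm₁x₁ : m₁ x₁ = 0 := by simp [hm₁def]
  have hG0 : G 0 = 0 := by rw [hGdef]; simp only; rw [hm₀0, hFx₀, hm₁x₁]
  -- differentiability of G on the ball
  have hGdiff : DifferentiableOn ℂ G (ball (0:ℂ) 1) := by
    intro z hz
    have h₀ := mobius_hasDerivAt x₀ (mobius_denom_ne hax₀ (habs.mp hz))
    have hz' := hm₀maps z hz
    have h₁ := hF (m₀ z) hz'
    have hz'' := hFball _ hz'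
    have h₂ := mobius_hasDerivAt x₁ (mobius_denom_ne hax₁ (habs.mp hz''))
    have := ((h₂.comp (m₀ z) h₁).comp z h₀).differentiableAt
    simp only [Function.comp_def] at this
    exact this.differentiableWithinAt
  -- the derivative of G at 0
  have hd₀ : HasDerivAt m₀ (((-1) * (1 - c₀ * 0) - (x₀ - 0) * (-c₀)) / (1 - c₀ * 0) ^ 2) 0 :=
    mobius_hasDerivAt x₀ (by simpa using mobius_denom_ne hax₀ (by simp : ‖(0:ℂ)‖ < 1))
  have hdF : HasDerivAt F ((deriv h x₁)⁻¹ * (β * deriv h x₀)) x₀ := by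
    have := hF x₀ hx₀
    rwa [hFx₀] at this
  have hd₁ : HasDerivAt m₁ (((-1) * (1 - c₁ * x₁) - (x₁ - x₁) * (-c₁)) / (1 - c₁ * x₁) ^ 2) x₁ :=
    mobius_hasDerivAt x₁ (mobius_denom_ne hax₁ hax₁)
  have hdF' : HasDerivAt F ((deriv h x₁)⁻¹ * (β * deriv h x₀)) (m₀ 0) := by rw [hm₀0]; exact hdF
  have hd₁' : HasDerivAt m₁ (((-1) * (1 - c₁ * x₁) - (x₁ - x₁) * (-c₁)) / (1 - c₁ * x₁) ^ 2)
      (F (m₀ 0)) := by rw [hm₀0, hFx₀]; exact hd₁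
  have hGderiv : HasDerivAt G
      ((((-1) * (1 - c₁ * x₁) - (x₁ - x₁) * (-c₁)) / (1 - c₁ * x₁) ^ 2) *
        ((deriv h x₁)⁻¹ * (β * deriv h x₀)) *
        (((-1) * (1 - c₀ * 0) - (x₀ - 0) * (-c₀)) / (1 - c₀ * 0) ^ 2)) 0 := by
    have := (hd₁'.comp 0 (hdF'.comp 0 hd₀))
    simp only [Function.comp_def] at this
    rw [mul_assoc]
    exact this
  -- Schwarz lemma
  have hSch : ‖deriv G 0‖ ≤ 1 :=
    Complex.norm_deriv_le_one_of_mapsTo_ball hGdiff (by rw [hG0]; exact hGmaps.mono_right ball_subset_closedBall) one_pos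
  rw [hGderiv.deriv] at hSch
  -- simplify the two Möbius derivatives
  have hcx₁ : c₁ * x₁ = ((Complex.normSq x₁ : ℝ) : ℂ) := by
    rw [hc₁, mul_comm]; exact Complex.mul_conj x₁
  have hne₁ : (1 : ℂ) - c₁ * x₁ ≠ 0 := mobius_denom_ne hax₁ hax₁
  have e₀ : ((-1) * (1 - c₀ * 0) - (x₀ - 0) * (-c₀)) / (1 - c₀ * 0) ^ 2
      = ((Complex.normSq x₀ : ℝ) : ℂ) - 1 := by
    have hx := Complex.mul_conj x₀
    rw [hc₀]
    field_simp
    linear_combination hx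
  have e₁ : ((-1) * (1 - c₁ * x₁) - (x₁ - x₁) * (-c₁)) / (1 - c₁ * x₁) ^ 2
      = -((1:ℂ) - ((Complex.normSq x₁ : ℝ) : ℂ))⁻¹ := by
    have hnum : ((-1) * (1 - c₁ * x₁) - (x₁ - x₁) * (-c₁)) = -(1 - c₁ * x₁) := by ring
    rw [hnum, pow_two, neg_div, div_self_mul_self', hcx₁]
  rw [e₀, e₁] at hSch
  -- positivity facts
  have hs₀ : 0 < 1 - Complex.normSq x₀ := by
    nlinarith [Complex.sq_norm x₀, norm_nonneg x₀]
  have hs₁ : 0 < 1 - Complex.normSq x₁ := by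
    nlinarith [Complex.sq_norm x₁, norm_nonneg x₁]
  have hA : 0 < ‖deriv h x₁‖ := norm_pos_iff.mpr (hderiv_ne x₁ hx₁)
  -- compute the absolute value in hSch
  have hABS : ‖-((1:ℂ) - ((Complex.normSq x₁ : ℝ) : ℂ))⁻¹ *
        ((deriv h x₁)⁻¹ * (β * deriv h x₀)) * (((Complex.normSq x₀ : ℝ) : ℂ) - 1)‖
      = (1 - Complex.normSq x₁)⁻¹ * ((‖deriv h x₁‖)⁻¹ *
          (‖β‖ * ‖deriv h x₀‖)) * (1 - Complex.normSq x₀) := by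
    have c1 : ((1:ℂ) - ((Complex.normSq x₁ : ℝ) : ℂ)) = (((1 - Complex.normSq x₁ : ℝ)) : ℂ) := by
      push_cast; ring
    have c0 : (((Complex.normSq x₀ : ℝ) : ℂ) - 1) = (((Complex.normSq x₀ - 1 : ℝ)) : ℂ) := by
      push_cast; ring
    simp only [c1, c0, norm_mul, norm_neg, norm_inv, Complex.norm_real, Real.norm_eq_abs]
    rw [abs_of_pos hs₁, abs_of_neg (by linarith : Complex.normSq x₀ - 1 < 0)]
    ring
  rw [hABS] at hSch
  -- finish
  have hfin : ‖β‖ * ‖deriv h x₀‖ * (1 - Complex.normSq x₀)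
      ≤ ‖deriv h x₁‖ * (1 - Complex.normSq x₁) := by
    have hmul := mul_le_mul_of_nonneg_left hSch (le_of_lt (mul_pos hA hs₁))
    calc ‖β‖ * ‖deriv h x₀‖ * (1 - Complex.normSq x₀)
        = ‖deriv h x₁‖ * (1 - Complex.normSq x₁) *
            ((1 - Complex.normSq x₁)⁻¹ * ((‖deriv h x₁‖)⁻¹ *
              (‖β‖ * ‖deriv h x₀‖)) * (1 - Complex.normSq x₀)) := by
          field_simp
      _ ≤ ‖deriv h x₁‖ * (1 - Complex.normSq x₁) * 1 := hmul
      _ = ‖deriv h x₁‖ * (1 - Complex.normSq x₁) := mul_one _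
  rw [Complex.sq_norm, Complex.sq_norm]
  exact hfin
end

section
/- Let λ ∈ ℂ with Re λ > 0 and let t > 0. Then (Re λ/|λ|)·|1 − e^{−λt}| ≤ 1 − |e^{−λt}|, and the inequality is strict whenever Im λ ≠ 0. -/
open Complex

lemma exp_contraction_sq_aux (a b t : ℝ) (ha : 0 < a) (ht : 0 < t) :
    (b ≠ 0 →
      a ^ 2 * (1 - 2 * Real.exp (-(a * t)) * Real.cos (b * t) + Real.exp (-(a * t)) ^ 2) <
        (a ^ 2 + b ^ 2) * (1 - Real.exp (-(a * t))) ^ 2) ∧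
    a ^ 2 * (1 - 2 * Real.exp (-(a * t)) * Real.cos (b * t) + Real.exp (-(a * t)) ^ 2) ≤
      (a ^ 2 + b ^ 2) * (1 - Real.exp (-(a * t))) ^ 2 := by
  set r := Real.exp (-(a * t)) with hr
  have hrpos : 0 < r := Real.exp_pos _
  have hsinh : (a * t / 2) ^ 2 ≤ Real.sinh (a * t / 2) ^ 2 := by
    have h := (Real.self_lt_sinh_iff.mpr (by positivity : (0:ℝ) < a * t / 2)).le
    exact pow_le_pow_left₀ (by positivity) h 2
  have hsq : (1 - r) ^ 2 = 4 * r * Real.sinh (a * t / 2) ^ 2 := by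
    rw [Real.sinh_eq]
    have h1 : r = Real.exp (-(a*t/2)) * Real.exp (-(a*t/2)) := by
      rw [hr, ← Real.exp_add]; ring_nf
    have h2 : Real.exp (a*t/2) * Real.exp (-(a*t/2)) = 1 := by
      rw [← Real.exp_add]; simp
    nlinarith [Real.exp_pos (a*t/2), Real.exp_pos (-(a*t/2))]
  have h3 : b ^ 2 * (1 - r) ^ 2 = 4 * r * b ^ 2 * Real.sinh (a * t / 2) ^ 2 := by
    rw [hsq]; ring
  have h2 : 4 * r * b ^ 2 * ((a * t / 2) ^ 2) ≤ 4 * r * b ^ 2 * Real.sinh (a * t / 2) ^ 2 :=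
    mul_le_mul_of_nonneg_left hsinh (by positivity)
  constructor
  · intro hb
    have hbt : b * t ≠ 0 := mul_ne_zero hb (ne_of_gt ht)
    have hc : 1 - Real.cos (b * t) < (b * t) ^ 2 / 2 := by
      have := Real.one_sub_sq_div_two_lt_cos hbt
      linarith
    have h1 : 2*a^2*r*(1 - Real.cos (b*t)) < 2*a^2*r*((b*t)^2/2) :=
      mul_lt_mul_of_pos_left hc (by positivity)
    nlinarith [h1, h2, h3]
  · have hc : 1 - Real.cos (b * t) ≤ (b * t) ^ 2 / 2 := by
      have := Real.one_sub_sq_div_two_le_cos (x := b * t)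
      linarith
    have h1 : 2*a^2*r*(1 - Real.cos (b*t)) ≤ 2*a^2*r*((b*t)^2/2) :=
      mul_le_mul_of_nonneg_left hc (by positivity)
    nlinarith [h1, h2, h3]

/-- Inequality (cor): for `Re λ > 0` and `t > 0`,
`(Re λ/|λ|)·|1 - e^{-λt}| ≤ 1 - |e^{-λt}|`, with strict inequality if `Im λ ≠ 0`. -/
theorem exp_contraction_inequality
    (lam : ℂ) (hlam : 0 < lam.re) (t : ℝ) (ht : 0 < t) :
    lam.re / ‖lam‖ * ‖1 - Complex.exp (-lam * t)‖ ≤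
      1 - ‖Complex.exp (-lam * t)‖ ∧
    (lam.im ≠ 0 →
      lam.re / ‖lam‖ * ‖1 - Complex.exp (-lam * t)‖ <
        1 - ‖Complex.exp (-lam * t)‖) := by
  have hlam0 : lam ≠ 0 := fun h => by simp [h] at hlam
  set a := lam.re with haa
  set b := lam.im with hbb
  set A := ‖lam‖ with hA
  have hApos : 0 < A := by simpa [hA] using norm_pos_iff.mpr hlam0
  have hAsq : A ^ 2 = a ^ 2 + b ^ 2 := by
    rw [hA, Complex.sq_norm, Complex.normSq_apply, haa, hbb]; ring
  set M := ‖1 - Complex.exp (-lam * t)‖ with hM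
  have hMnn : 0 ≤ M := norm_nonneg _
  have hzre : (-lam * (t:ℂ)).re = -(a * t) := by
    simp only [Complex.neg_re, Complex.mul_re, Complex.ofReal_re, Complex.ofReal_im,
      Complex.neg_im]
    ring
  have hzim : (-lam * (t:ℂ)).im = -(b * t) := by
    simp only [Complex.neg_im, Complex.mul_im, Complex.ofReal_re, Complex.ofReal_im,
      Complex.neg_re]
    ring
  have habs : ‖Complex.exp (-lam * t)‖ = Real.exp (-(a * t)) := by
    rw [Complex.norm_exp, hzre]
  set r := Real.exp (-(a * t)) with hr
  have hrpos : 0 < r := Real.exp_pos _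
  have hr1 : r < 1 := Real.exp_lt_one_iff.mpr (by nlinarith)
  have hMsq : M ^ 2 = 1 - 2 * r * Real.cos (b * t) + r ^ 2 := by
    rw [hM, Complex.sq_norm, Complex.normSq_apply]
    simp only [Complex.sub_re, Complex.sub_im, Complex.one_re, Complex.one_im,
      Complex.exp_re, Complex.exp_im, hzre, hzim, Real.cos_neg, Real.sin_neg]
    rw [← hr]
    have := Real.sin_sq_add_cos_sq (b * t)
    nlinarith
  obtain ⟨hstrict, hle⟩ := exp_contraction_sq_aux a b t hlam ht
  have hARnn : 0 ≤ A * (1 - r) := mul_nonneg hApos.le (by linarith)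
  have hmain : a * M ≤ A * (1 - r) := by
    apply le_of_pow_le_pow_left₀ two_ne_zero hARnn
    calc (a * M) ^ 2 = a ^ 2 * M ^ 2 := by ring
      _ ≤ (a ^ 2 + b ^ 2) * (1 - r) ^ 2 := by rw [hMsq]; exact hle
      _ = (A * (1 - r)) ^ 2 := by rw [← hAsq] ; ring
  constructor
  · rw [habs, div_mul_eq_mul_div, div_le_iff₀ hApos]
    linarith [hmain]
  · intro hb
    have hmain' : a * M < A * (1 - r) := by
      apply lt_of_pow_lt_pow_left₀ 2 hARnn
      calc (a * M) ^ 2 = a ^ 2 * M ^ 2 := by ring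
        _ < (a ^ 2 + b ^ 2) * (1 - r) ^ 2 := by rw [hMsq]; exact hstrict hb
        _ = (A * (1 - r)) ^ 2 := by rw [← hAsq]; ring
    rw [habs, div_mul_eq_mul_div, div_lt_iff₀ hApos]
    linarith [hmain']
end

section
/- Let λ ∈ ℂ with Re λ > 0. Then the infimum over all t > 0 of the quantity (1 − |e^{−λt}|)/|1 − e^{−λt}| equals Re λ/|λ|. -/
open Complex Set Filter

/-- Key integral inequality: `|1 - e^{-z}| ≤ (|z|/Re z)(1 - e^{-Re z})` for `Re z > 0`. -/
lemma exp_contraction_key_ineq (z : ℂ) (hz : 0 < z.re) :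
    ‖1 - Complex.exp (-z)‖ ≤ (‖z‖ / z.re) * (1 - Real.exp (-z.re)) := by
  have hz0 : z ≠ 0 := fun h => by simp [h] at hz
  have hint : (1 - Complex.exp (-z)) = z * ∫ s in (0:ℝ)..1, Complex.exp (-z * s) := by
    rw [integral_exp_mul_complex (neg_ne_zero.mpr hz0)]
    push_cast
    rw [mul_one, mul_zero, Complex.exp_zero]
    field_simp [hz0]
    ring
  have hnorm : ∀ s : ℝ, ‖Complex.exp (-z * s)‖ = Real.exp (-z.re * s) := by
    intro s
    rw [Complex.norm_exp]
    congr 1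
    simp [Complex.mul_re]
  have hreal : ∫ s in (0:ℝ)..1, Real.exp (-z.re * s) = (1 - Real.exp (-z.re)) / z.re := by
    have hc : (-(z.re:ℂ)) ≠ 0 := by
      simpa using ne_of_gt hz
    have h := integral_exp_mul_complex (a := 0) (b := 1) hc
    have h2 : ((∫ s in (0:ℝ)..1, Real.exp (-z.re * s) : ℝ) : ℂ)
        = (((1 - Real.exp (-z.re)) / z.re : ℝ) : ℂ) := by
      rw [← intervalIntegral.integral_ofReal]
      have hcast : ∀ s : ℝ, ((Real.exp (-z.re * s) : ℝ) : ℂ)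
          = Complex.exp ((-(z.re:ℂ)) * s) := by
        intro s
        rw [Complex.ofReal_exp]
        push_cast
        ring_nf
      simp_rw [hcast]
      rw [h]
      push_cast
      ring_nf
      simp only [Complex.exp_zero]
      ring
    exact_mod_cast h2
  calc ‖1 - Complex.exp (-z)‖
      = ‖z‖ * ‖∫ s in (0:ℝ)..1, Complex.exp (-z * s)‖ := by
        rw [hint, norm_mul]
    _ ≤ ‖z‖ * ∫ s in (0:ℝ)..1, ‖Complex.exp (-z * s)‖ := by
        exact mul_le_mul_of_nonneg_left
          (intervalIntegral.norm_integral_le_integral_norm zero_le_one)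
          (norm_nonneg z)
    _ = ‖z‖ * ((1 - Real.exp (-z.re)) / z.re) := by
        simp_rw [hnorm]; rw [hreal]
    _ = (‖z‖ / z.re) * (1 - Real.exp (-z.re)) := by ring

/-- For `Re λ > 0`, the infimum over `t > 0` of
`(1 - |e^{-λt}|)/|1 - e^{-λt}|` equals `Re λ/|λ|`. -/
theorem exp_contraction_quotient_inf
    (lam : ℂ) (hlam : 0 < lam.re) :
    sInf ((fun t : ℝ =>
        (1 - ‖Complex.exp (-lam * t)‖) /
          ‖1 - Complex.exp (-lam * t)‖) '' Ioi (0 : ℝ)) =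
      lam.re / ‖lam‖ := by
  set f : ℝ → ℝ := fun t =>
      (1 - ‖Complex.exp (-lam * t)‖) /
        ‖1 - Complex.exp (-lam * t)‖ with hf
  have hlam0 : lam ≠ 0 := fun h => by simp [h] at hlam
  have habs : 0 < ‖lam‖ := norm_pos_iff.mpr hlam0
  -- basic facts for t > 0
  have habs_exp : ∀ t : ℝ, ‖Complex.exp (-lam * t)‖ = Real.exp (-lam.re * t) := by
    intro t
    rw [Complex.norm_exp]
    congr 1
    simp [Complex.mul_re]
  have hden_pos : ∀ t : ℝ, 0 < t → 0 < ‖1 - Complex.exp (-lam * t)‖ := by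
    intro t ht
    have hne : Complex.exp (-lam * t) ≠ 1 := by
      intro h
      have := habs_exp t
      rw [h] at this
      simp only [norm_one] at this
      have hlt : Real.exp (-lam.re * t) < 1 := by
        rw [Real.exp_lt_one_iff]
        nlinarith
      rw [← this] at hlt
      exact lt_irrefl _ hlt
    have : (1 : ℂ) - Complex.exp (-lam * t) ≠ 0 := sub_ne_zero.mpr (Ne.symm hne)
    exact norm_pos_iff.mpr this
  -- pointwise lower bound
  have hlb : ∀ t : ℝ, 0 < t → lam.re / ‖lam‖ ≤ f t := by
    intro t ht
    have hzre : 0 < (lam * t).re := by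
      rw [Complex.mul_re]
      simp only [Complex.ofReal_re, Complex.ofReal_im, mul_zero, sub_zero]
      positivity
    have hkey := exp_contraction_key_ineq (lam * t) hzre
    have hz_eq : -(lam * (t:ℂ)) = -lam * t := by ring
    rw [hz_eq] at hkey
    have hre_eq : (lam * (t:ℂ)).re = lam.re * t := by
      simp [Complex.mul_re]
    have habs_eq : ‖lam * t‖ = ‖lam‖ * t := by
      rw [norm_mul, Complex.norm_real, Real.norm_eq_abs, abs_of_pos ht]
    rw [hre_eq, habs_eq] at hkey
    have hnum_pos : 0 < 1 - Real.exp (-(lam.re * t)) := by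
      have : Real.exp (-(lam.re * t)) < 1 := by
        rw [Real.exp_lt_one_iff]
        nlinarith
      linarith
    have hden := hden_pos t ht
    rw [hf]
    simp only
    rw [habs_exp t]
    have hnum_eq : -lam.re * t = -(lam.re * t) := by ring
    rw [hnum_eq]
    have hre := ne_of_gt hlam
    have ht' := ne_of_gt ht
    rw [div_le_div_iff₀ habs hden]
    calc lam.re * ‖1 - Complex.exp (-lam * ↑t)‖
        ≤ lam.re * ((‖lam‖ * t / (lam.re * t)) * (1 - Real.exp (-(lam.re * t)))) := by
          apply mul_le_mul_of_nonneg_left hkey (le_of_lt hlam)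
      _ = (1 - Real.exp (-(lam.re * t))) * ‖lam‖ := by
          field_simp
  -- the limit as t → 0⁺
  have hderiv : HasDerivAt (fun t : ℝ => 1 - Complex.exp (-lam * t)) lam 0 := by
    have h1 : HasDerivAt (fun t : ℝ => ((t : ℝ) : ℂ)) 1 0 := by
      simpa using (hasDerivAt_id (0:ℝ)).ofReal_comp
    have h2 : HasDerivAt (fun t : ℝ => -lam * (t : ℂ)) (-lam) 0 := by
      simpa using h1.const_mul (-lam)
    have h3 := h2.cexp
    have h4 := h3.const_sub 1
    simpa using h4
  have hslope : Tendsto (fun t : ℝ => (1 - Complex.exp (-lam * t)) / (t : ℂ))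
      (nhdsWithin 0 (Ioi 0)) (nhds lam) := by
    have := hasDerivAt_iff_tendsto_slope.mp hderiv
    have hmono : nhdsWithin (0:ℝ) (Ioi 0) ≤ nhdsWithin 0 {(0:ℝ)}ᶜ := by
      apply nhdsWithin_mono
      intro x hx
      exact ne_of_gt hx
    have h := this.mono_left hmono
    refine h.congr' ?_
    filter_upwards [self_mem_nhdsWithin] with t ht
    have ht0 : ((t:ℝ):ℂ) ≠ 0 := Complex.ofReal_ne_zero.mpr (ne_of_gt ht)
    rw [slope_def_module]
    simp only [sub_zero, Complex.real_smul]
    rw [show (-lam * ((0:ℝ):ℂ)) = 0 by push_cast; ring, Complex.exp_zero]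
    push_cast
    field_simp
    ring
  have habs_slope : Tendsto (fun t : ℝ => ‖1 - Complex.exp (-lam * t)‖ / t)
      (nhdsWithin 0 (Ioi 0)) (nhds (‖lam‖)) := by
    have h := (continuous_norm.tendsto lam).comp hslope
    refine h.congr' ?_
    filter_upwards [self_mem_nhdsWithin] with t ht
    simp only [Function.comp_apply, norm_div, Complex.norm_real, Real.norm_eq_abs, abs_of_pos (mem_Ioi.mp ht)]
  have hnumderiv : HasDerivAt (fun t : ℝ => 1 - Real.exp (-lam.re * t)) lam.re 0 := by
    have h1 : HasDerivAt (fun t : ℝ => -lam.re * t) (-lam.re) 0 := by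
      simpa using (hasDerivAt_id (0:ℝ)).const_mul (-lam.re)
    have h2 := h1.exp
    have h3 := h2.const_sub 1
    simpa using h3
  have hnum_slope : Tendsto (fun t : ℝ => (1 - Real.exp (-lam.re * t)) / t)
      (nhdsWithin 0 (Ioi 0)) (nhds lam.re) := by
    have := hasDerivAt_iff_tendsto_slope.mp hnumderiv
    have hmono : nhdsWithin (0:ℝ) (Ioi 0) ≤ nhdsWithin 0 {(0:ℝ)}ᶜ := by
      apply nhdsWithin_mono
      intro x hx
      exact ne_of_gt hx
    have h := this.mono_left hmono
    refine h.congr' ?_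
    filter_upwards [self_mem_nhdsWithin] with t ht
    rw [slope_def_field]
    rw [sub_zero]
    congr 1
    simp
  have htend : Tendsto f (nhdsWithin 0 (Ioi 0)) (nhds (lam.re / ‖lam‖)) := by
    have h := hnum_slope.div habs_slope (ne_of_gt habs)
    refine h.congr' ?_
    filter_upwards [self_mem_nhdsWithin] with t ht
    rw [hf]
    simp only
    rw [habs_exp t]
    simp only [Pi.div_apply]
    rw [div_div_div_cancel_right₀ (ne_of_gt (mem_Ioi.mp ht))]
  -- conclude
  have hne : ((fun t : ℝ =>
      (1 - ‖Complex.exp (-lam * t)‖) /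
        ‖1 - Complex.exp (-lam * t)‖) '' Ioi (0 : ℝ)).Nonempty :=
    ⟨f 1, ⟨1, by norm_num, rfl⟩⟩
  have hbdd : lam.re / ‖lam‖ ∈
      lowerBounds ((fun t : ℝ =>
        (1 - ‖Complex.exp (-lam * t)‖) /
          ‖1 - Complex.exp (-lam * t)‖) '' Ioi (0 : ℝ)) := by
    rintro x ⟨t, ht, rfl⟩
    exact hlb t ht
  refine le_antisymm ?_ (le_csInf hne hbdd)
  · refine ge_of_tendsto htend ?_
    filter_upwards [self_mem_nhdsWithin] with t ht
    exact csInf_le ⟨lam.re / ‖lam‖, hbdd⟩ ⟨t, ht, rfl⟩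
end
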